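/- The operation $\cdot_r$ on $\overline{\mathbb{R}}_+$ with the opposite (reverse) order, defined as ordinary multiplication except that $0\cdot_r(+\infty)=(+\infty)\cdot_r 0 = +\infty$, preserves filtered infima in each argument: for any directed-downward set $D\subseteq \overline{\mathbb{R}}_+$ and any $a\in\overline{\mathbb{R}}_+$, $a\cdot_r \inf D = \inf_{d\in D}(a\cdot_r d)$. -/

import Mathlib

open scoped ENNReal

noncomputable section

/-- The "right" product on `ℝ≥0∞`: the ordinary product, except `0 ⬝ ∞ = ∞ ⬝ 0 = ∞`. -/
def mulR (a b : ℝ≥0∞) : ℝ≥0∞ :=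
  if (a = 0 ∧ b = ⊤) ∨ (a = ⊤ ∧ b = 0) then ⊤ else a * b

/-- `⬝ᵣ` is Scott-continuous in each argument on `ℝ≥0∞` with the *opposite* order:
it preserves infima of (nonempty) downward-directed subsets of `ℝ≥0∞`. -/
theorem mulR_preserves_filtered_infima (a : ℝ≥0∞) (D : Set ℝ≥0∞)
    (hne : D.Nonempty) (hdir : DirectedOn (· ≥ ·) D) :
    mulR a (sInf D) = ⨅ d ∈ D, mulR a d := by
  rcases eq_or_ne a 0 with rfl | ha0
  · have hm : ∀ b : ℝ≥0∞, mulR 0 b = if b = ⊤ then ⊤ else 0 := by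
      intro b; simp [mulR]
    simp only [hm]
    by_cases htop : ∀ d ∈ D, d = ⊤
    · have hD : sInf D = ⊤ := by
        rw [sInf_eq_top]; exact htop
      rw [if_pos hD, eq_comm, iInf_eq_top]
      intro d; rw [iInf_eq_top]; intro hd; rw [if_pos (htop d hd)]
    · push_neg at htop
      obtain ⟨d, hd, hdt⟩ := htop
      have hD : sInf D ≠ ⊤ := by
        intro h; exact hdt ((sInf_eq_top.mp h) d hd)
      rw [if_neg hD, eq_comm]
      refine le_antisymm ?_ zero_le
      calc ⨅ d ∈ D, (if d = ⊤ then (⊤ : ℝ≥0∞) else 0) ≤ if d = ⊤ then ⊤ else 0 :=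
            biInf_le _ hd
        _ = 0 := if_neg hdt
  · rcases eq_or_ne a ⊤ with rfl | hat
    · have hm : ∀ b : ℝ≥0∞, mulR ⊤ b = ⊤ := by
        intro b
        rcases eq_or_ne b 0 with rfl | hb
        · simp [mulR]
        · simp [mulR, hb, ENNReal.top_mul hb]
      simp [hm]
    · have hm : ∀ b : ℝ≥0∞, mulR a b = a * b := by
        intro b; simp [mulR, ha0, hat]
      simp only [hm]
      rw [sInf_eq_iInf', ENNReal.mul_iInf_of_ne ha0 hat, iInf_subtype']
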